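/- (Legendre's convexity theorem.) Let f : ℝⁿ → ℝ be convex and twice continuously differentiable. Then the closure in ℝⁿ of the image of its gradient, cl{∇f(x) : x ∈ ℝⁿ}, is a convex set. -/

import Mathlib

open InnerProductSpace Filter Topology

local notation "⟪" x ", " y "⟫" => @inner ℝ _ _ x y

/-- Gradient inequality for convex functions: the function lies above its tangent plane. -/
lemma aux_grad_ineq {n : ℕ} (f : EuclideanSpace ℝ (Fin n) → ℝ)
    (hconv : ConvexOn ℝ Set.univ f) {x g : EuclideanSpace ℝ (Fin n)}
    (hg : HasGradientAt f g x) (y : EuclideanSpace ℝ (Fin n)) :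
    ⟪g, y - x⟫ ≤ f y - f x := by
  set φ : ℝ → ℝ := fun s => f (x + s • (y - x)) with hφ
  have h1 : HasDerivAt (fun s : ℝ => x + s • (y - x)) (y - x) 0 := by
    simpa using ((hasDerivAt_id (0 : ℝ)).smul_const (y - x)).const_add x
  have h0 : x = x + (0 : ℝ) • (y - x) := by simp
  have hfd : HasFDerivAt f (toDual ℝ _ g) (x + (0 : ℝ) • (y - x)) := by
    rw [← h0]; exact hg.hasFDerivAt
  have hphi : HasDerivAt φ ⟪g, y - x⟫ 0 := by
    have := hfd.comp_hasDerivAt 0 h1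
    simpa [Function.comp_def, toDual_apply_apply] using this
  rw [hasDerivAt_iff_tendsto_slope] at hphi
  have hmono : 𝓝[>] (0 : ℝ) ≤ 𝓝[≠] (0 : ℝ) :=
    nhdsWithin_mono 0 fun s hs => ne_of_gt hs
  refine le_of_tendsto (hphi.mono_left hmono) ?_
  filter_upwards [Ioc_mem_nhdsGT_of_mem (Set.mem_Ico.2 ⟨le_refl (0 : ℝ), zero_lt_one⟩)]
    with s hs
  obtain ⟨hs0, hs1⟩ := hs
  have hpt : x + s • (y - x) = (1 - s) • x + s • y := by module
  have hcomb := hconv.2 (Set.mem_univ x) (Set.mem_univ y)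
    (show (0:ℝ) ≤ 1 - s by linarith) (show (0:ℝ) ≤ s from hs0.le)
    (show (1 - s) + s = 1 by ring)
  rw [← hpt, smul_eq_mul, smul_eq_mul] at hcomb
  have hφ0 : φ 0 = f x := by simp [hφ]
  have hφs : φ s = f (x + s • (y - x)) := rfl
  rw [slope_def_field, sub_zero, div_le_iff₀ hs0, hφ0, hφs]
  nlinarith

/-- Gradient of the smooth coercive perturbation `x ↦ √(1 + ‖x‖²)`. -/
lemma aux_sqrt_grad {n : ℕ} (x : EuclideanSpace ℝ (Fin n)) :
    HasGradientAt (fun z : EuclideanSpace ℝ (Fin n) => Real.sqrt (1 + ‖z‖ ^ 2))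
      ((Real.sqrt (1 + ‖x‖ ^ 2))⁻¹ • x) x := by
  have hpos : (0 : ℝ) < 1 + ‖x‖ ^ 2 := by positivity
  have hspos : (0 : ℝ) < Real.sqrt (1 + ‖x‖ ^ 2) := Real.sqrt_pos.2 hpos
  have hu : HasFDerivAt (fun z : EuclideanSpace ℝ (Fin n) => 1 + ‖z‖ ^ 2)
      (2 • (innerSL ℝ x).comp (ContinuousLinearMap.id ℝ _)) x := by
    simpa using ((hasFDerivAt_id x).norm_sq).const_add 1
  have hs : HasDerivAt Real.sqrt (1 / (2 * Real.sqrt (1 + ‖x‖ ^ 2))) (1 + ‖x‖ ^ 2) :=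
    Real.hasDerivAt_sqrt hpos.ne'
  have hcomp := hs.comp_hasFDerivAt x hu
  have heq : HasFDerivAt (fun z : EuclideanSpace ℝ (Fin n) => Real.sqrt (1 + ‖z‖ ^ 2))
      (toDual ℝ _ ((Real.sqrt (1 + ‖x‖ ^ 2))⁻¹ • x)) x := by
    refine hcomp.congr_fderiv ?_
    ext v
    simp [toDual_apply_apply, real_inner_smul_left, two_smul]
    field_simp
    ring
  simpa using heq.hasGradientAt

/-- Any convex combination of two gradient values is approximated by gradient values. -/
lemma aux_density {n : ℕ} (f : EuclideanSpace ℝ (Fin n) → ℝ)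
    (hconv : ConvexOn ℝ Set.univ f) (hsmooth : ContDiff ℝ 2 f)
    (a b : EuclideanSpace ℝ (Fin n)) {t : ℝ} (ht0 : 0 ≤ t) (ht1 : t ≤ 1)
    {ε : ℝ} (hε : 0 < ε) :
    ∃ x, ‖gradient f x - (t • gradient f a + (1 - t) • gradient f b)‖ ≤ ε := by
  have hdiff : Differentiable ℝ f := hsmooth.differentiable (by norm_num)
  have hdf : ∀ x, HasGradientAt f (gradient f x) x := fun x => (hdiff x).hasGradientAt
  set y := t • gradient f a + (1 - t) • gradient f b with hy
  set G : EuclideanSpace ℝ (Fin n) → ℝ :=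
    fun x => f x - ⟪y, x⟫ + ε * Real.sqrt (1 + ‖x‖ ^ 2) with hG
  set m : ℝ := t * (f a - ⟪gradient f a, a⟫) + (1 - t) * (f b - ⟪gradient f b, b⟫) with hm
  -- lower bound
  have hlow : ∀ x, m + ε * ‖x‖ ≤ G x := by
    intro x
    have ha := aux_grad_ineq f hconv (hdf a) x
    have hb := aux_grad_ineq f hconv (hdf b) x
    rw [inner_sub_right] at ha hb
    have hyx : ⟪y, x⟫ = t * ⟪gradient f a, x⟫ + (1 - t) * ⟪gradient f b, x⟫ := by
      rw [hy, inner_add_left, real_inner_smul_left, real_inner_smul_left]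
    have hsq : ‖x‖ ≤ Real.sqrt (1 + ‖x‖ ^ 2) :=
      (Real.le_sqrt (norm_nonneg x) (by positivity)).2 (by nlinarith [sq_nonneg ‖x‖])
    have h1 : m + ⟪y, x⟫ ≤ f x := by rw [hyx, hm]; nlinarith
    have h2 : ε * ‖x‖ ≤ ε * Real.sqrt (1 + ‖x‖ ^ 2) :=
      mul_le_mul_of_nonneg_left hsq hε.le
    rw [hG]; dsimp only; linarith
  -- coercivity and existence of a global minimum
  have hcont : Continuous G := by
    apply ((hsmooth.continuous.sub (innerSL ℝ y).continuous).add)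
    exact continuous_const.mul (Real.continuous_sqrt.comp
      (continuous_const.add ((continuous_norm).pow 2)))
  have hcoer : Tendsto G (cocompact _) atTop := by
    apply tendsto_atTop_mono hlow
    exact tendsto_atTop_add_const_left _ m
      (Tendsto.const_mul_atTop hε tendsto_norm_cocompact_atTop)
  obtain ⟨z, hz⟩ := hcont.exists_forall_le hcoer
  have hloc : IsLocalMin G z := Filter.Eventually.of_forall hz
  -- derivative of G at the minimum
  set w : EuclideanSpace ℝ (Fin n) := (Real.sqrt (1 + ‖z‖ ^ 2))⁻¹ • z with hw
  have hGd : HasFDerivAt G (toDual ℝ _ (gradient f z - y + ε • w)) z := by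
    have h1 : HasFDerivAt f (toDual ℝ _ (gradient f z)) z := (hdf z).hasFDerivAt
    have h2 : HasFDerivAt (fun x : EuclideanSpace ℝ (Fin n) => ⟪y, x⟫) (innerSL ℝ y) z :=
      (innerSL ℝ y).hasFDerivAt
    have h3 : HasFDerivAt (fun x : EuclideanSpace ℝ (Fin n) => ε * Real.sqrt (1 + ‖x‖ ^ 2))
        (ε • toDual ℝ _ w) z := ((aux_sqrt_grad z).hasFDerivAt).const_mul ε
    have := (h1.sub h2).add h3
    refine this.congr_fderiv ?_
    ext v
    simp [toDual_apply_apply, inner_sub_left, inner_add_left, real_inner_smul_left]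
  have hzero := hloc.hasFDerivAt_eq_zero hGd
  have hvec : gradient f z - y + ε • w = 0 := by
    have := congrArg (fun L => (toDual ℝ (EuclideanSpace ℝ (Fin n))).symm L) hzero
    simpa [gradient] using this
  have hnormw : ‖w‖ ≤ 1 := by
    have hpos : (0 : ℝ) < Real.sqrt (1 + ‖z‖ ^ 2) := Real.sqrt_pos.2 (by positivity)
    have hle : ‖z‖ ≤ Real.sqrt (1 + ‖z‖ ^ 2) :=
      (Real.le_sqrt (norm_nonneg z) (by positivity)).2 (by nlinarith [sq_nonneg ‖z‖])
    rw [hw, norm_smul, norm_inv, Real.norm_eq_abs, abs_of_pos hpos]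
    rw [inv_mul_le_one₀ hpos]
    exact hle
  refine ⟨z, ?_⟩
  have : gradient f z - y = -(ε • w) := by
    have := hvec
    linear_combination (norm := module) this
  rw [this, norm_neg, norm_smul, Real.norm_eq_abs, abs_of_pos hε]
  calc ε * ‖w‖ ≤ ε * 1 := mul_le_mul_of_nonneg_left hnormw hε.le
    _ = ε := mul_one ε

/-- **Legendre's convexity theorem.** If `f : ℝⁿ → ℝ` is convex and twice
continuously differentiable, then the closure of the image of its gradient is convex. -/
theorem statement12 (n : ℕ) (f : EuclideanSpace ℝ (Fin n) → ℝ)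
    (hconv : ConvexOn ℝ Set.univ f) (hsmooth : ContDiff ℝ 2 f) :
    Convex ℝ (closure (Set.range (gradient f))) := by
  intro u hu v hv s r hs hr hsr
  rw [Metric.mem_closure_iff]
  intro ε hε
  have hε3 : 0 < ε / 3 := by linarith
  obtain ⟨u', hu', hud⟩ := Metric.mem_closure_iff.1 hu (ε / 3) hε3
  obtain ⟨v', hv', hvd⟩ := Metric.mem_closure_iff.1 hv (ε / 3) hε3
  obtain ⟨p, hp⟩ := hu'
  obtain ⟨q, hq⟩ := hv'
  have hr' : r = 1 - s := by linarith
  obtain ⟨x, hx⟩ := aux_density f hconv hsmooth p q hs (by linarith)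
    (t := s) (ε := ε / 3) hε3
  refine ⟨gradient f x, Set.mem_range_self x, ?_⟩
  rw [dist_eq_norm]
  have h1 : s • u + r • v - gradient f x =
      (s • (u - u') + r • (v - v')) + ((s • gradient f p + (1 - s) • gradient f q)
        - gradient f x) := by
    rw [hp, hq, hr']; module
  rw [h1]
  have h2 : ‖s • (u - u') + r • (v - v')‖ ≤ s * (ε / 3) + r * (ε / 3) := by
    refine (norm_add_le _ _).trans ?_
    gcongr
    · rw [norm_smul, Real.norm_eq_abs, abs_of_nonneg hs]
      exact mul_le_mul_of_nonneg_left (le_of_lt (by rwa [dist_eq_norm] at hud)) hs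
    · rw [norm_smul, Real.norm_eq_abs, abs_of_nonneg hr]
      exact mul_le_mul_of_nonneg_left (le_of_lt (by rwa [dist_eq_norm] at hvd)) hr
  have h3 : ‖(s • gradient f p + (1 - s) • gradient f q) - gradient f x‖ ≤ ε / 3 := by
    rw [← norm_neg]
    simpa [neg_sub] using hx
  calc ‖(s • (u - u') + r • (v - v')) + ((s • gradient f p + (1 - s) • gradient f q)
        - gradient f x)‖
      ≤ ‖s • (u - u') + r • (v - v')‖ + ‖(s • gradient f p + (1 - s) • gradient f q)
        - gradient f x‖ := norm_add_le _ _
    _ ≤ (s * (ε / 3) + r * (ε / 3)) + ε / 3 := by linarith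
    _ = (s + r) * (ε / 3) + ε / 3 := by ring
    _ < ε := by rw [hsr]; linarith
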